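/- Suppose 1 ≤ k ≤ n, p ∈ [1, ∞), and distance is measured in the Schatten p-norm raised to the power p (i.e., the sum of p-th powers of singular values). Then the distance d((1/n)·I_n, D_{n,k})^p equals (n−k)/n^p + k·(1/k − 1/n)^p. -/

import Mathlib

open Matrix BigOperators Finset
open Polynomial
open scoped ComplexOrder

/-- The singular values of a square complex matrix. -/
noncomputable def singVals {n : ℕ} (A : Matrix (Fin n) (Fin n) ℂ) : Fin n → ℝ :=
  fun i => Real.sqrt ((Matrix.isHermitian_conjTranspose_mul_self A).eigenvalues i)

/-- The trace norm: the sum of singular values. -/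
noncomputable def traceNorm {n : ℕ} (A : Matrix (Fin n) (Fin n) ℂ) : ℝ :=
  ∑ i, singVals A i

/-- A density matrix: positive semidefinite with trace 1. -/
def IsDensity {n : ℕ} (X : Matrix (Fin n) (Fin n) ℂ) : Prop :=
  X.PosSemidef ∧ X.trace = 1

/-- Distance from `X` to the set of density matrices of rank at most `k`,
measured via a given norm `N`. -/
noncomputable def distToLowRank {n : ℕ} (N : Matrix (Fin n) (Fin n) ℂ → ℝ) (k : ℕ)
    (X : Matrix (Fin n) (Fin n) ℂ) : ℝ :=
  sInf {t | ∃ Y : Matrix (Fin n) (Fin n) ℂ, IsDensity Y ∧ Y.rank ≤ k ∧ t = N (X - Y)}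

/-- The `p`-th power of the Schatten `p`-norm: the sum of `p`-th powers of singular values. -/
noncomputable def schattenPowP {n : ℕ} (p : ℝ) (A : Matrix (Fin n) (Fin n) ℂ) : ℝ :=
  ∑ i, (singVals A i) ^ p


variable {n : ℕ}

lemma charpoly_conj_eq (U D V : Matrix (Fin n) (Fin n) ℂ) (hUV : U * V = 1) :
    (U * D * V).charpoly = D.charpoly := by
  have key : charmatrix (U * D * V)
      = (C : ℂ →+* ℂ[X]).mapMatrix U * charmatrix D * (C : ℂ →+* ℂ[X]).mapMatrix V := by
    unfold charmatrix
    rw [mul_sub, sub_mul, _root_.map_mul, _root_.map_mul]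
    congr 1
    rw [mul_assoc, (scalar_commute (X : ℂ[X]) (fun r => Commute.all _ _) _).eq, ← mul_assoc,
      ← _root_.map_mul, hUV, _root_.map_one, one_mul]
  have hdet : ((C : ℂ →+* ℂ[X]).mapMatrix U).det * ((C : ℂ →+* ℂ[X]).mapMatrix V).det = 1 := by
    rw [← det_mul, ← _root_.map_mul, hUV, _root_.map_one, det_one]
  unfold Matrix.charpoly
  rw [key, det_mul, det_mul, mul_comm, ← mul_assoc, mul_comm (((C : ℂ →+* ℂ[X]).mapMatrix V).det),
    hdet, one_mul]

lemma charpoly_diagonal_roots (d : Fin n → ℂ) :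
    (Matrix.diagonal d).charpoly.roots = Multiset.map d Finset.univ.val := by
  have h1 : charmatrix (Matrix.diagonal d) = Matrix.diagonal (fun i => (X : ℂ[X]) - C (d i)) := by
    ext i j
    by_cases h : i = j
    · subst h; simp
    · simp [h, Matrix.diagonal_apply_ne _ h]
  have h2 : (Matrix.diagonal d).charpoly = ∏ i, ((X : ℂ[X]) - C (d i)) := by
    unfold Matrix.charpoly
    rw [h1, det_diagonal]
  rw [h2]
  have : ∏ i, ((X : ℂ[X]) - C (d i))
      = ((Multiset.map d Finset.univ.val).map (fun a => (X : ℂ[X]) - C a)).prod := by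
    rw [Multiset.map_map]; rfl
  rw [this, Polynomial.roots_multiset_prod_X_sub_C]

lemma eig_sum {H : Matrix (Fin n) (Fin n) ℂ} (hH : H.IsHermitian) {d : Fin n → ℝ}
    {U : Matrix (Fin n) (Fin n) ℂ} (hU : U * star U = 1)
    (h : H = U * Matrix.diagonal (fun i => (d i : ℂ)) * star U) (f : ℝ → ℝ) :
    ∑ i, f (hH.eigenvalues i) = ∑ i, f (d i) := by
  have h1 : H.charpoly.roots = Multiset.map (fun i => (d i : ℂ)) Finset.univ.val := by
    rw [h, charpoly_conj_eq _ _ _ hU, charpoly_diagonal_roots]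
  have h2 : H.charpoly.roots
      = Multiset.map (fun i => (hH.eigenvalues i : ℂ)) Finset.univ.val := by
    have hsp := hH.spectral_theorem
    have hU' : (hH.eigenvectorUnitary : Matrix (Fin n) (Fin n) ℂ)
        * star (hH.eigenvectorUnitary : Matrix (Fin n) (Fin n) ℂ) = 1 :=
      (Matrix.mem_unitaryGroup_iff).mp hH.eigenvectorUnitary.2
    have : Matrix.diagonal ((RCLike.ofReal : ℝ → ℂ) ∘ hH.eigenvalues)
        = Matrix.diagonal (fun i => (hH.eigenvalues i : ℂ)) := rfl
    conv_lhs => rw [hsp, Unitary.conjStarAlgAut_apply]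
    rw [charpoly_conj_eq _ _ _ hU', this, charpoly_diagonal_roots]
  have h3 : Multiset.map hH.eigenvalues Finset.univ.val = Multiset.map d Finset.univ.val := by
    apply Multiset.map_injective Complex.ofReal_injective
    rw [Multiset.map_map, Multiset.map_map]
    rw [h1] at h2
    exact h2.symm
  calc ∑ i, f (hH.eigenvalues i)
      = ((Multiset.map hH.eigenvalues Finset.univ.val).map f).sum := by
        rw [Multiset.map_map]; rfl
    _ = ((Multiset.map d Finset.univ.val).map f).sum := by rw [h3]
    _ = ∑ i, f (d i) := by rw [Multiset.map_map]; rfl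

lemma schattenPowP_of_conj (p : ℝ) {A : Matrix (Fin n) (Fin n) ℂ} {d : Fin n → ℝ}
    {U : Matrix (Fin n) (Fin n) ℂ} (hU : U * star U = 1) (hU2 : star U * U = 1)
    (h : A = U * Matrix.diagonal (fun i => (d i : ℂ)) * star U) :
    schattenPowP p A = ∑ i, |d i| ^ p := by
  set D : Matrix (Fin n) (Fin n) ℂ := Matrix.diagonal (fun i => (d i : ℂ)) with hD
  have hdiagH : Dᴴ = D := by
    have hst : (star fun i => ((d i : ℂ))) = fun i => ((d i : ℂ)) := by
      funext i
      exact Complex.conj_ofReal _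
    rw [hD, Matrix.diagonal_conjTranspose, hst]
  have hAH : Aᴴ = A := by
    rw [h]
    simp only [conjTranspose_mul, star_eq_conjTranspose, conjTranspose_conjTranspose, hdiagH]
    rw [mul_assoc]
  have hK : Aᴴ * A = U * Matrix.diagonal (fun i => ((d i ^ 2 : ℝ) : ℂ)) * star U := by
    rw [hAH, h]
    simp only [mul_assoc]
    rw [show star U * (U * (D * star U)) = D * star U from by
      rw [← mul_assoc, hU2, one_mul]]
    rw [show D * (D * star U) = (D * D) * star U from by rw [mul_assoc]]
    rw [hD, Matrix.diagonal_mul_diagonal]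
    congr 2
    funext i
    push_cast
    ring
  have := eig_sum (Matrix.isHermitian_conjTranspose_mul_self A) hU hK
    (fun x => Real.sqrt x ^ p)
  unfold schattenPowP singVals
  rw [this]
  congr 1
  ext i
  rw [Real.sqrt_sq_eq_abs]

lemma convexOn_abs_rpow {p : ℝ} (hp : 1 ≤ p) :
    ConvexOn ℝ Set.univ (fun x : ℝ => |x| ^ p) := by
  have habs : ConvexOn ℝ Set.univ (fun x : ℝ => |x|) := by
    exact (convexOn_univ_norm (E := ℝ))
  have himg : (fun x : ℝ => |x|) '' Set.univ = Set.Ici 0 := by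
    rw [Set.image_univ]
    ext x
    simp only [Set.mem_range, Set.mem_Ici]
    constructor
    · rintro ⟨y, rfl⟩; exact abs_nonneg y
    · intro hx; exact ⟨x, abs_of_nonneg hx⟩
  have hg : ConvexOn ℝ ((fun x : ℝ => |x|) '' Set.univ) (fun x : ℝ => x ^ p) := by
    rw [himg]; exact convexOn_rpow hp
  have hmono : MonotoneOn (fun x : ℝ => x ^ p) ((fun x : ℝ => |x|) '' Set.univ) := by
    rw [himg]
    intro x hx y hy hxy
    exact Real.rpow_le_rpow hx hxy (le_trans zero_le_one hp)
  exact hg.comp habs hmono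

lemma key_lower (n k : ℕ) (hk1 : 1 ≤ k) (hkn : k ≤ n) (p : ℝ) (hp : 1 ≤ p)
    (μ : Fin n → ℝ) (hμ0 : ∀ i, 0 ≤ μ i) (hsum : ∑ i, μ i = 1)
    (hcard : (Finset.univ.filter (fun i => μ i ≠ 0)).card ≤ k) :
    ((n : ℝ) - k) / (n : ℝ) ^ p + k * (1 / k - 1 / n) ^ p ≤ ∑ i, |1 / (n : ℝ) - μ i| ^ p := by
  have hn1 : 1 ≤ n := le_trans hk1 hkn
  have hnR : (0 : ℝ) < n := by exact_mod_cast Nat.lt_of_lt_of_le Nat.zero_lt_one hn1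
  have hkR : (0 : ℝ) < k := by exact_mod_cast hk1
  obtain ⟨T, hST, -, hTcard⟩ := Finset.exists_subsuperset_card_eq
    (Finset.subset_univ (Finset.univ.filter (fun i => μ i ≠ 0))) hcard (by simpa using hkn)
  have hzero : ∀ i ∈ Tᶜ, μ i = 0 := by
    intro i hi
    by_contra hne
    exact (Finset.mem_compl.mp hi) (hST (Finset.mem_filter.mpr ⟨Finset.mem_univ i, hne⟩))
  have hsplit : ∑ i, |1 / (n : ℝ) - μ i| ^ p
      = ∑ i ∈ T, |1 / (n : ℝ) - μ i| ^ p + ∑ i ∈ Tᶜ, |1 / (n : ℝ) - μ i| ^ p :=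
    (Finset.sum_add_sum_compl T _).symm
  have hTc : ∑ i ∈ Tᶜ, |1 / (n : ℝ) - μ i| ^ p = ((n : ℝ) - k) / (n : ℝ) ^ p := by
    rw [Finset.sum_congr rfl (fun i hi => by
      rw [hzero i hi, sub_zero, abs_of_nonneg (by positivity)])]
    rw [Finset.sum_const, Finset.card_compl, hTcard, Fintype.card_fin, nsmul_eq_mul,
      Nat.cast_sub hkn, Real.div_rpow (by norm_num) (le_of_lt hnR), Real.one_rpow]
    ring
  have hμT : ∑ i ∈ T, μ i = 1 := by
    have := Finset.sum_add_sum_compl T μ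
    rw [hsum, Finset.sum_eq_zero hzero, add_zero] at this
    exact this
  -- convexity of t ↦ |1/n - t|^p
  have hconv : ConvexOn ℝ Set.univ (fun t : ℝ => |1 / (n : ℝ) - t| ^ p) := by
    refine ⟨convex_univ, ?_⟩
    intro x _ y _ a b ha hb hab
    have h := (convexOn_abs_rpow hp).2 (Set.mem_univ (1 / (n : ℝ) - x))
      (Set.mem_univ (1 / (n : ℝ) - y)) ha hb hab
    have hxy : a • ((1 : ℝ) / n - x) + b • ((1 : ℝ) / n - y)
        = 1 / (n : ℝ) - (a • x + b • y) := by
      simp only [smul_eq_mul]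
      linear_combination ((1 : ℝ) / n) * hab
    rwa [hxy] at h
  have hjensen := hconv.map_sum_le (t := T) (w := fun _ => 1 / (k : ℝ))
    (p := μ) (fun i _ => by positivity)
    (by rw [Finset.sum_const, hTcard, nsmul_eq_mul]; field_simp)
    (fun i _ => Set.mem_univ _)
  have hcenter : ∑ i ∈ T, (1 / (k : ℝ)) • μ i = 1 / k := by
    rw [← Finset.smul_sum, hμT, smul_eq_mul, mul_one]
  rw [hcenter] at hjensen
  have habs : |1 / (n : ℝ) - 1 / k| = 1 / (k : ℝ) - 1 / n := by
    rw [abs_sub_comm, abs_of_nonneg]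
    have : (1 : ℝ) / n ≤ 1 / k :=
      one_div_le_one_div_of_le hkR (by exact_mod_cast hkn)
    linarith
  have hT : (k : ℝ) * (1 / (k : ℝ) - 1 / n) ^ p ≤ ∑ i ∈ T, |1 / (n : ℝ) - μ i| ^ p := by
    have h2 : ∑ i ∈ T, (1 / (k : ℝ)) * |1 / (n : ℝ) - μ i| ^ p
        = (1 / (k : ℝ)) * ∑ i ∈ T, |1 / (n : ℝ) - μ i| ^ p := by
      rw [Finset.mul_sum]
    rw [habs] at hjensen
    simp only [smul_eq_mul] at hjensen
    rw [h2] at hjensen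
    calc (k : ℝ) * (1 / (k : ℝ) - 1 / n) ^ p
        ≤ (k : ℝ) * ((1 / (k : ℝ)) * ∑ i ∈ T, |1 / (n : ℝ) - μ i| ^ p) :=
          mul_le_mul_of_nonneg_left hjensen (le_of_lt hkR)
      _ = ∑ i ∈ T, |1 / (n : ℝ) - μ i| ^ p := by field_simp
  rw [hsplit, hTc]
  linarith

lemma schatten_lower (n k : ℕ) (hk1 : 1 ≤ k) (hkn : k ≤ n) (p : ℝ) (hp : 1 ≤ p)
    (Y : Matrix (Fin n) (Fin n) ℂ) (hY : IsDensity Y) (hrank : Y.rank ≤ k) :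
    ((n : ℝ) - k) / (n : ℝ) ^ p + k * (1 / k - 1 / n) ^ p
      ≤ schattenPowP p ((1 / (n : ℂ)) • (1 : Matrix (Fin n) (Fin n) ℂ) - Y) := by
  have hH : Y.IsHermitian := hY.1.1
  set μ : Fin n → ℝ := hH.eigenvalues with hμ
  set U : Matrix (Fin n) (Fin n) ℂ := (hH.eigenvectorUnitary : Matrix (Fin n) (Fin n) ℂ)
    with hUdef
  have hU : U * star U = 1 := (Matrix.mem_unitaryGroup_iff).mp hH.eigenvectorUnitary.2
  have hU2 : star U * U = 1 := (Matrix.mem_unitaryGroup_iff').mp hH.eigenvectorUnitary.2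
  have hsp : Y = U * Matrix.diagonal (fun i => (μ i : ℂ)) * star U := hH.spectral_theorem
  have hdec : (1 / (n : ℂ)) • (1 : Matrix (Fin n) (Fin n) ℂ) - Y
      = U * Matrix.diagonal (fun i => ((1 / (n : ℝ) - μ i : ℝ) : ℂ)) * star U := by
    have h1 : Matrix.diagonal (fun i : Fin n => ((1 / (n : ℝ) - μ i : ℝ) : ℂ))
        = (1 / (n : ℂ)) • (1 : Matrix (Fin n) (Fin n) ℂ)
          - Matrix.diagonal (fun i => (μ i : ℂ)) := by
      rw [Matrix.smul_one_eq_diagonal]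
      ext i j
      by_cases hij : i = j
      · subst hij
        simp only [Matrix.diagonal_apply_eq, Matrix.sub_apply]
        push_cast
        ring
      · simp [Matrix.diagonal_apply_ne _ hij]
    rw [h1, mul_sub, sub_mul, hsp]
    congr 1
    rw [Matrix.mul_smul, Matrix.mul_one, Matrix.smul_mul, hU]
  rw [schattenPowP_of_conj p hU hU2 hdec]
  apply key_lower n k hk1 hkn p hp μ (fun i => hY.1.eigenvalues_nonneg i)
  · -- sum of eigenvalues is 1
    have htr : Y.trace = ∑ i, (μ i : ℂ) := by
      rw [hsp, Matrix.trace_mul_cycle, hU2, Matrix.one_mul, Matrix.trace_diagonal]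
    have : ((∑ i, μ i : ℝ) : ℂ) = 1 := by
      push_cast
      rw [← htr, hY.2]
    exact_mod_cast this
  · -- rank condition
    have := hH.rank_eq_card_non_zero_eigs
    rw [Fintype.card_subtype] at this
    rw [← this]
    exact hrank

lemma card_filter_lt (n k : ℕ) (hkn : k ≤ n) :
    ((Finset.univ : Finset (Fin n)).filter (fun i : Fin n => (i : ℕ) < k)).card = k := by
  have h : ((Finset.univ : Finset (Fin n)).filter (fun i : Fin n => (i : ℕ) < k))
      = (Finset.range k).attachFin
        (fun m hm => lt_of_lt_of_le (Finset.mem_range.mp hm) hkn) := by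
    ext i
    simp [Finset.mem_attachFin]
  rw [h, Finset.card_attachFin, Finset.card_range]

lemma schatten_upper (n k : ℕ) (hk1 : 1 ≤ k) (hkn : k ≤ n) (p : ℝ) (hp : 1 ≤ p) :
    ∃ Y : Matrix (Fin n) (Fin n) ℂ, IsDensity Y ∧ Y.rank ≤ k ∧
      schattenPowP p ((1 / (n : ℂ)) • (1 : Matrix (Fin n) (Fin n) ℂ) - Y)
        = ((n : ℝ) - k) / (n : ℝ) ^ p + k * (1 / k - 1 / n) ^ p := by
  have hn1 : 1 ≤ n := le_trans hk1 hkn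
  have hnR : (0 : ℝ) < n := by exact_mod_cast Nat.lt_of_lt_of_le Nat.zero_lt_one hn1
  have hkR : (0 : ℝ) < k := by exact_mod_cast hk1
  set d : Fin n → ℝ := fun i => if (i : ℕ) < k then 1 / (k : ℝ) else 0 with hd
  refine ⟨Matrix.diagonal (fun i => (d i : ℂ)), ⟨?_, ?_⟩, ?_, ?_⟩
  · -- PosSemidef
    rw [Matrix.posSemidef_diagonal_iff]
    intro i
    have : (0 : ℝ) ≤ d i := by
      rw [hd]
      dsimp only
      split_ifs
      · positivity
      · exact le_refl 0
    exact Complex.zero_le_real.mpr this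
  · -- trace
    rw [Matrix.trace_diagonal]
    have : ∑ i, d i = 1 := by
      rw [hd]
      rw [Finset.sum_ite, Finset.sum_const, Finset.sum_const_zero, add_zero,
        card_filter_lt n k hkn, nsmul_eq_mul]
      field_simp
    rw [← Complex.ofReal_sum, this, Complex.ofReal_one]
  · -- rank
    rw [Matrix.rank_diagonal, Fintype.card_subtype]
    have : (Finset.univ.filter (fun i : Fin n => (d i : ℂ) ≠ 0))
        = Finset.univ.filter (fun i : Fin n => (i : ℕ) < k) := by
      apply Finset.filter_congr
      intro i _
      rw [hd]
      dsimp only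
      split_ifs with h
      · simp only [iff_true, h]
        intro hc
        have : (1 / (k : ℝ)) = 0 := by exact_mod_cast hc
        rw [_root_.div_eq_zero_iff] at this
        rcases this with h1 | h2
        · norm_num at h1
        · exact absurd h2 (ne_of_gt hkR)
      · simpa using h
    rw [this, card_filter_lt n k hkn]
  · -- the distance value
    have hdec : (1 / (n : ℂ)) • (1 : Matrix (Fin n) (Fin n) ℂ)
          - Matrix.diagonal (fun i => (d i : ℂ))
        = 1 * Matrix.diagonal (fun i => ((1 / (n : ℝ) - d i : ℝ) : ℂ)) * star 1 := by
      rw [star_one, mul_one, one_mul, Matrix.smul_one_eq_diagonal]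
      ext i j
      by_cases hij : i = j
      · subst hij
        simp only [Matrix.diagonal_apply_eq, Matrix.sub_apply]
        push_cast
        ring
      · simp [Matrix.diagonal_apply_ne _ hij]
    rw [schattenPowP_of_conj p (by rw [star_one, mul_one]) (by rw [star_one, mul_one]) hdec]
    have habs : ∀ i : Fin n, |1 / (n : ℝ) - d i| ^ p
        = if (i : ℕ) < k then (1 / (k : ℝ) - 1 / n) ^ p else (1 / (n : ℝ)) ^ p := by
      intro i
      rw [hd]
      dsimp only
      split_ifs with h
      · rw [abs_sub_comm, abs_of_nonneg]
        have : (1 : ℝ) / n ≤ 1 / k :=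
          one_div_le_one_div_of_le hkR (by exact_mod_cast hkn)
        linarith
      · rw [sub_zero, abs_of_nonneg (by positivity)]
    rw [Finset.sum_congr rfl (fun i _ => habs i), Finset.sum_ite, Finset.sum_const,
      Finset.sum_const, card_filter_lt n k hkn, Finset.filter_not, Finset.card_sdiff_of_subset
        (Finset.filter_subset _ _), Finset.card_univ, Fintype.card_fin,
      card_filter_lt n k hkn, nsmul_eq_mul, nsmul_eq_mul, Nat.cast_sub hkn,
      Real.div_rpow (by norm_num) (le_of_lt hnR), Real.one_rpow]
    ring

theorem stmt_9 (n k : ℕ) (hk1 : 1 ≤ k) (hkn : k ≤ n) (p : ℝ) (hp : 1 ≤ p) :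
    distToLowRank (schattenPowP p) k ((1 / (n : ℂ)) • (1 : Matrix (Fin n) (Fin n) ℂ))
      = ((n : ℝ) - k) / (n : ℝ) ^ p + (k : ℝ) * (1 / (k : ℝ) - 1 / (n : ℝ)) ^ p := by
  obtain ⟨Y₀, hY₀d, hY₀r, hY₀v⟩ := schatten_upper n k hk1 hkn p hp
  unfold distToLowRank
  set v : ℝ := ((n : ℝ) - k) / (n : ℝ) ^ p + (k : ℝ) * (1 / (k : ℝ) - 1 / (n : ℝ)) ^ p with hv
  have hmem : v ∈ {t | ∃ Y : Matrix (Fin n) (Fin n) ℂ, IsDensity Y ∧ Y.rank ≤ k ∧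
      t = schattenPowP p ((1 / (n : ℂ)) • (1 : Matrix (Fin n) (Fin n) ℂ) - Y)} :=
    ⟨Y₀, hY₀d, hY₀r, hY₀v.symm⟩
  have hlb : ∀ t ∈ {t | ∃ Y : Matrix (Fin n) (Fin n) ℂ, IsDensity Y ∧ Y.rank ≤ k ∧
      t = schattenPowP p ((1 / (n : ℂ)) • (1 : Matrix (Fin n) (Fin n) ℂ) - Y)}, v ≤ t := by
    rintro t ⟨Y, hYd, hYr, rfl⟩
    exact schatten_lower n k hk1 hkn p hp Y hYd hYr
  exact le_antisymm (csInf_le ⟨v, hlb⟩ hmem) (le_csInf ⟨v, hmem⟩ hlb)
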